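/- Let (A[z],σ) be an A-extension of order λ of a constant-stable difference ring (A,σ) whose constant set K = const(A,σ) is a field, with σ(z) = a·z where a ∈ K* is a primitive λ-th root of unity. Then const(A[z],σ) = const(A,σ), i.e., z is an R-monomial. -/
import Mathlib


/-- For an A-extension `A[z]` of order `lam` of a constant-stable difference ring whose
constants form a field, with `σ z = a·z` for a primitive `lam`-th root of unity
`a` among the constants, the constants do not grow (`z` is an R-monomial). -/
theorem stmt_8 (A E : Type*) [CommRing A] [CharZero A] [CommRing E]
    (σA : A ≃+* A) (σE : E ≃+* E) (ι : A →+* E)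
    (hinj : Function.Injective ι)
    (hcomm : ∀ c : A, σE (ι c) = ι (σA c))
    (hcs : ∀ k : ℕ, 1 ≤ k → ∀ c : A, (⇑σA)^[k] c = c → σA c = c)
    (hK : ∀ c : A, σA c = c → c ≠ 0 → ∃ d : A, σA d = d ∧ c * d = 1)
    (lam : ℕ) (hlam : 1 < lam) (z : E) (a : A)
    (haconst : σA a = a)
    (haprim : a ^ lam = 1 ∧ ∀ j : ℕ, 1 ≤ j → j < lam → a ^ j ≠ 1)
    (hz : z ^ lam = 1) (hσz : σE z = ι a * z)
    (hbasis : ∀ f : E, ∃! c : Fin lam → A, f = ∑ i : Fin lam, ι (c i) * z ^ (i : ℕ)) :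
    ∀ f : E, σE f = f → ∃ c : A, σA c = c ∧ f = ι c := by
  intro f hf
  obtain ⟨c, hc, huniq⟩ := hbasis f
  have key : ∀ i : Fin lam, σA (c i) * a ^ (i : ℕ) = c i := by
    have h2 : f = ∑ i : Fin lam, ι (σA (c i) * a ^ (i : ℕ)) * z ^ (i : ℕ) := by
      conv_lhs => rw [← hf, hc]
      rw [map_sum]
      refine Finset.sum_congr rfl fun i _ => ?_
      rw [map_mul, map_pow, hσz, hcomm, mul_pow, map_mul, map_pow]
      ring
    have h3 := huniq _ h2
    intro i
    exact congrFun h3 i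
  have hiter : ∀ i : Fin lam, ∀ k : ℕ, (⇑σA)^[k] (c i) * a ^ ((i : ℕ) * k) = c i := by
    intro i k
    induction k with
    | zero => simp
    | succ k ih =>
      have h4 : σA ((⇑σA)^[k] (c i)) * a ^ ((i : ℕ) * k) = σA (c i) := by
        have := congrArg σA ih
        rw [map_mul, map_pow, haconst] at this
        exact this
      rw [Function.iterate_succ_apply']
      calc σA ((⇑σA)^[k] (c i)) * a ^ ((i : ℕ) * (k + 1))
          = (σA ((⇑σA)^[k] (c i)) * a ^ ((i : ℕ) * k)) * a ^ (i : ℕ) := by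
            rw [mul_assoc, ← pow_add]; ring_nf
        _ = σA (c i) * a ^ (i : ℕ) := by rw [h4]
        _ = c i := key i
  have hconst : ∀ i : Fin lam, σA (c i) = c i := by
    intro i
    refine hcs lam (by omega) _ ?_
    have := hiter i lam
    rwa [mul_comm (i : ℕ) lam, pow_mul, haprim.1, one_pow, mul_one] at this
  have hzero : ∀ i : Fin lam, 1 ≤ (i : ℕ) → c i = 0 := by
    intro i hi
    have h5 : c i * (a ^ (i : ℕ) - 1) = 0 := by
      have := key i
      rw [hconst i] at this
      linear_combination this
    have hne : a ^ (i : ℕ) - 1 ≠ 0 := by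
      intro h
      exact haprim.2 (i : ℕ) hi i.isLt (by linear_combination h)
    have hconst2 : σA (a ^ (i : ℕ) - 1) = a ^ (i : ℕ) - 1 := by
      rw [map_sub, map_pow, map_one, haconst]
    obtain ⟨d, _, hd⟩ := hK _ hconst2 hne
    calc c i = c i * ((a ^ (i : ℕ) - 1) * d) := by rw [hd, mul_one]
      _ = (c i * (a ^ (i : ℕ) - 1)) * d := by ring
      _ = 0 := by rw [h5, zero_mul]
  refine ⟨c ⟨0, by omega⟩, hconst _, ?_⟩
  rw [hc]
  rw [Finset.sum_eq_single (⟨0, by omega⟩ : Fin lam)]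
  · simp
  · intro i _ hne
    have : 1 ≤ (i : ℕ) := by
      by_contra h
      exact hne (Fin.ext (show (i:ℕ) = 0 by omega))
    rw [hzero i this]; simp
  · intro h; exact absurd (Finset.mem_univ _) h
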